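/- arXiv:2111.14404 — 2 statements merged into one kernel-verified Lean document; each statement's English description precedes it below -/
import Mathlib

section
/- A point x₀ ∈ ℝⁿ belongs to the weakly unobservable subspace V*(Σ) of the system ẋ = Ax + Bu, y = Cx + Du if and only if there exists a linear feedback matrix F ∈ ℝ^{m×n} such that (A + BF)V*(Σ) ⊆ V*(Σ) and (C + DF) restricted to V*(Σ) is zero, and x₀ lies in the largest subspace V with (A + BF)V ⊆ V and (C + DF)V = 0 for some F. -/
open Matrix Topology Filter

/-- The set of weakly unobservable points: initial states `x₀` for which there is
an input `u` making the output identically zero for all `t ≥ 0`. -/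
def weaklyUnobservable (n m p : ℕ)
    (A : Matrix (Fin n) (Fin n) ℝ) (B : Matrix (Fin n) (Fin m) ℝ)
    (C : Matrix (Fin p) (Fin n) ℝ) (D : Matrix (Fin p) (Fin m) ℝ) :
    Set (Fin n → ℝ) :=
  {x₀ | ∃ (x : ℝ → Fin n → ℝ) (u : ℝ → Fin m → ℝ),
    x 0 = x₀ ∧
    (∀ t : ℝ, 0 ≤ t → HasDerivAt x (A.mulVec (x t) + B.mulVec (u t)) t) ∧
    (∀ t : ℝ, 0 ≤ t → C.mulVec (x t) + D.mulVec (u t) = 0)}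

/-- A subspace `V` is `(A+BF, C+DF)`-invariant-with-zero-output for the feedback `F`. -/
def FeedbackInvariant (n m p : ℕ)
    (A : Matrix (Fin n) (Fin n) ℝ) (B : Matrix (Fin n) (Fin m) ℝ)
    (C : Matrix (Fin p) (Fin n) ℝ) (D : Matrix (Fin p) (Fin m) ℝ)
    (V : Submodule ℝ (Fin n → ℝ)) : Prop :=
  ∃ F : Matrix (Fin m) (Fin n) ℝ,
    (∀ v ∈ V, (A + B * F).mulVec v ∈ V) ∧ (∀ v ∈ V, (C + D * F).mulVec v = 0)

section Aux

open NormedSpace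

attribute [local instance] Matrix.linftyOpNormedAddCommGroup Matrix.linftyOpNormedRing
  Matrix.linftyOpNormedAlgebra

variable {n m p : ℕ} {A : Matrix (Fin n) (Fin n) ℝ} {B : Matrix (Fin n) (Fin m) ℝ}
  {C : Matrix (Fin p) (Fin n) ℝ} {D : Matrix (Fin p) (Fin m) ℝ}

/-- `mulVec` by a fixed vector, as a continuous linear map in the matrix argument. -/
noncomputable def mulVecCLM (v : Fin n → ℝ) :
    Matrix (Fin n) (Fin n) ℝ →L[ℝ] (Fin n → ℝ) :=
  LinearMap.toContinuousLinearMap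
    { toFun := fun N => N.mulVec v
      map_add' := fun M N => Matrix.add_mulVec M N v
      map_smul' := fun c N => Matrix.smul_mulVec c N v }

lemma mulVecCLM_apply (v : Fin n → ℝ) (N : Matrix (Fin n) (Fin n) ℝ) :
    mulVecCLM v N = N.mulVec v := rfl

/-- An `M`-invariant subspace is invariant under `exp (t • M)`. -/
lemma exp_invariant (V : Submodule ℝ (Fin n → ℝ)) (M : Matrix (Fin n) (Fin n) ℝ)
    (hM : ∀ v ∈ V, M.mulVec v ∈ V) (v : Fin n → ℝ) (hv : v ∈ V) (t : ℝ) :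
    (NormedSpace.exp (t • M)).mulVec v ∈ V := by
  have hpow : ∀ k : ℕ, ((t • M) ^ k).mulVec v ∈ V := by
    intro k
    induction k with
    | zero => simpa using hv
    | succ k ih =>
      rw [pow_succ', Matrix.smul_mul, Matrix.smul_mulVec, ← Matrix.mulVec_mulVec]
      exact V.smul_mem _ (hM _ ih)
  have hs : HasSum (fun k : ℕ => ((k.factorial : ℝ)⁻¹) • (t • M) ^ k) (NormedSpace.exp (t • M)) :=
    NormedSpace.exp_series_hasSum_exp' (t • M)
  have hs2 := hs.mapL (mulVecCLM v)
  have hmem : ∀ k : ℕ, (mulVecCLM v) (((k.factorial : ℝ)⁻¹) • (t • M) ^ k) ∈ V := by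
    intro k
    rw [_root_.map_smul]
    exact V.smul_mem _ (by simpa [mulVecCLM_apply] using hpow k)
  have hclosed : IsClosed (V : Set (Fin n → ℝ)) := V.closed_of_finiteDimensional
  have := hclosed.mem_of_tendsto hs2.tendsto_sum_nat
    (Filter.Eventually.of_forall fun N => V.sum_mem fun k _ => hmem k)
  simpa [mulVecCLM_apply] using this

lemma exp_deriv (M : Matrix (Fin n) (Fin n) ℝ) (v : Fin n → ℝ) (t : ℝ) :
    HasDerivAt (fun s : ℝ => (NormedSpace.exp (s • M)).mulVec v)
      (M.mulVec ((NormedSpace.exp (t • M)).mulVec v)) t := by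
  have h := hasDerivAt_exp_smul_const' (𝕂 := ℝ) M t
  have h2 := (mulVecCLM v).hasFDerivAt.comp_hasDerivAt t h
  have h3 : (mulVecCLM v) (M * NormedSpace.exp (t • M)) = M.mulVec ((NormedSpace.exp (t • M)).mulVec v) := by
    rw [mulVecCLM_apply, Matrix.mulVec_mulVec]
  exact h2.congr_deriv h3

/-- The pointwise version of feedback invariance. -/
def PW (A : Matrix (Fin n) (Fin n) ℝ) (B : Matrix (Fin n) (Fin m) ℝ)
    (C : Matrix (Fin p) (Fin n) ℝ) (D : Matrix (Fin p) (Fin m) ℝ)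
    (V : Submodule ℝ (Fin n → ℝ)) : Prop :=
  ∀ v ∈ V, ∃ u : Fin m → ℝ, A.mulVec v + B.mulVec u ∈ V ∧ C.mulVec v + D.mulVec u = 0

lemma pw_of_fi (V : Submodule ℝ (Fin n → ℝ)) (h : FeedbackInvariant n m p A B C D V) :
    PW A B C D V := by
  obtain ⟨F, h1, h2⟩ := h
  intro v hv
  refine ⟨F.mulVec v, ?_, ?_⟩
  · simpa [Matrix.add_mulVec, Matrix.mulVec_mulVec] using h1 v hv
  · simpa [Matrix.add_mulVec, Matrix.mulVec_mulVec] using h2 v hv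

lemma fi_of_pw (V : Submodule ℝ (Fin n → ℝ)) (h : PW A B C D V) :
    FeedbackInvariant n m p A B C D V := by
  classical
  obtain ⟨q, hq⟩ := Submodule.exists_isCompl V
  set π : (Fin n → ℝ) →ₗ[ℝ] V := Submodule.linearProjOfIsCompl V q hq with hπ
  let b := Module.Basis.ofVectorSpace ℝ V
  choose u hu1 hu2 using fun i => h (b i) (b i).2
  let G : V →ₗ[ℝ] (Fin m → ℝ) := b.constr ℝ u
  let T : V →ₗ[ℝ] (Fin n → ℝ) :=
    (A.mulVecLin.comp V.subtype) + (B.mulVecLin.comp G)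
  let T' : V →ₗ[ℝ] (Fin p → ℝ) :=
    (C.mulVecLin.comp V.subtype) + (D.mulVecLin.comp G)
  have hT : ∀ w : V, T w ∈ V := by
    have : Submodule.span ℝ (Set.range b) ≤ Submodule.comap T V := by
      rw [Submodule.span_le]
      rintro _ ⟨i, rfl⟩
      simpa [T, G, Module.Basis.constr_basis] using hu1 i
    rw [b.span_eq] at this
    intro w; exact this trivial
  have hT' : ∀ w : V, T' w = 0 := by
    have : Submodule.span ℝ (Set.range b) ≤ LinearMap.ker T' := by
      rw [Submodule.span_le]
      rintro _ ⟨i, rfl⟩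
      simpa [T', G, Module.Basis.constr_basis] using hu2 i
    rw [b.span_eq] at this
    intro w; exact this trivial
  refine ⟨LinearMap.toMatrix' (G.comp π), ?_, ?_⟩ <;> intro v hv
  · have hF : (LinearMap.toMatrix' (G.comp π)).mulVec v = G ⟨v, hv⟩ := by
      rw [← Matrix.toLin'_apply, Matrix.toLin'_toMatrix']
      simp [π, Submodule.linearProjOfIsCompl_apply_left hq ⟨v, hv⟩]
      exact congrArg G (Submodule.linearProjOfIsCompl_apply_left hq ⟨v, hv⟩)
    rw [Matrix.add_mulVec, ← Matrix.mulVec_mulVec, hF]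
    simpa [T] using hT ⟨v, hv⟩
  · have hF : (LinearMap.toMatrix' (G.comp π)).mulVec v = G ⟨v, hv⟩ := by
      rw [← Matrix.toLin'_apply, Matrix.toLin'_toMatrix']
      simp [π, Submodule.linearProjOfIsCompl_apply_left hq ⟨v, hv⟩]
      exact congrArg G (Submodule.linearProjOfIsCompl_apply_left hq ⟨v, hv⟩)
    rw [Matrix.add_mulVec, ← Matrix.mulVec_mulVec, hF]
    simpa [T'] using hT' ⟨v, hv⟩

/-- The supremum of all feedback invariant subspaces is feedback invariant. -/
lemma fi_sSup :
    FeedbackInvariant n m p A B C D (sSup {V | FeedbackInvariant n m p A B C D V}) := by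
  set S : Set (Submodule ℝ (Fin n → ℝ)) := {V | FeedbackInvariant n m p A B C D V}
  set Vmax := sSup S with hVmax
  apply fi_of_pw
  intro v hv
  have hspan : Vmax = Submodule.span ℝ (⋃ V : S, ((V : Submodule ℝ (Fin n → ℝ)) : Set (Fin n → ℝ))) := by
    rw [hVmax, sSup_eq_iSup', Submodule.iSup_eq_span]
  rw [hspan] at hv
  induction hv using Submodule.span_induction with
  | mem x hx =>
      obtain ⟨_, ⟨⟨V, hV⟩, rfl⟩, hxV⟩ := hx
      obtain ⟨ux, hx1, hx2⟩ := pw_of_fi V hV x hxV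
      exact ⟨ux, le_sSup hV hx1, hx2⟩
  | zero => exact ⟨0, by simp, by simp⟩
  | add x y hx hy ihx ihy =>
      obtain ⟨ux, hx1, hx2⟩ := ihx
      obtain ⟨uy, hy1, hy2⟩ := ihy
      refine ⟨ux + uy, ?_, ?_⟩
      · rw [Matrix.mulVec_add, Matrix.mulVec_add]
        have := Vmax.add_mem hx1 hy1
        convert this using 1; abel
      · rw [Matrix.mulVec_add, Matrix.mulVec_add]
        rw [show C.mulVec x + C.mulVec y + (D.mulVec ux + D.mulVec uy)
            = (C.mulVec x + D.mulVec ux) + (C.mulVec y + D.mulVec uy) by abel, hx2, hy2,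
          add_zero]
  | smul c x hx ihx =>
      obtain ⟨ux, hx1, hx2⟩ := ihx
      refine ⟨c • ux, ?_, ?_⟩
      · rw [Matrix.mulVec_smul, Matrix.mulVec_smul, ← smul_add]
        exact Vmax.smul_mem _ hx1
      · rw [Matrix.mulVec_smul, Matrix.mulVec_smul, ← smul_add, hx2, smul_zero]


variable (n m p A B C D) in
/-- The set of weakly unobservable points, as a submodule. -/
def WUsub : Submodule ℝ (Fin n → ℝ) where
  carrier := weaklyUnobservable n m p A B C D
  zero_mem' := by
    refine ⟨fun _ => 0, fun _ => 0, rfl, fun t ht => ?_, fun t ht => by simp⟩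
    simpa using hasDerivAt_const t (0 : Fin n → ℝ)
  add_mem' := by
    rintro a b ⟨x1, u1, h10, h1d, h1o⟩ ⟨x2, u2, h20, h2d, h2o⟩
    refine ⟨x1 + x2, u1 + u2, by simp [h10, h20], fun t ht => ?_, fun t ht => ?_⟩
    · have := (h1d t ht).add (h2d t ht)
      convert this using 1
      iterate 3 rfl
      simp only [Pi.add_apply, Matrix.mulVec_add]
      abel
    · have h1 := h1o t ht
      have h2 := h2o t ht
      simp only [Pi.add_apply, Matrix.mulVec_add]
      rw [show C.mulVec (x1 t) + C.mulVec (x2 t) + (D.mulVec (u1 t) + D.mulVec (u2 t))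
          = (C.mulVec (x1 t) + D.mulVec (u1 t)) + (C.mulVec (x2 t) + D.mulVec (u2 t)) by abel,
        h1, h2, add_zero]
  smul_mem' := by
    rintro c a ⟨x1, u1, h10, h1d, h1o⟩
    refine ⟨c • x1, c • u1, by simp [h10], fun t ht => ?_, fun t ht => ?_⟩
    · have := (h1d t ht).const_smul c
      convert this using 1
      iterate 3 rfl
      simp [Matrix.mulVec_smul, smul_add]
    · have h1 := h1o t ht
      simp only [Pi.smul_apply, Matrix.mulVec_smul]
      rw [← smul_add, h1, smul_zero]

lemma pw_wu : PW A B C D (WUsub n m p A B C D) := by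
  rintro v ⟨x, u, h0, hd, ho⟩
  refine ⟨u 0, ?_, by rw [← h0]; exact ho 0 le_rfl⟩
  have hW : ∀ h : ℝ, 0 ≤ h → x h ∈ WUsub n m p A B C D := by
    intro h hh
    refine ⟨fun t => x (t + h), fun t => u (t + h), by simp, fun t ht => ?_, fun t ht =>
      ho (t + h) (by linarith)⟩
    exact (hd (t + h) (by linarith)).comp_add_const t h
  have hclosed : IsClosed ((WUsub n m p A B C D : Set (Fin n → ℝ))) :=
    (WUsub n m p A B C D).closed_of_finiteDimensional
  have hv : v ∈ WUsub n m p A B C D := ⟨x, u, h0, hd, ho⟩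
  have hder : HasDerivAt x (A.mulVec v + B.mulVec (u 0)) 0 := by
    have := hd 0 le_rfl
    rwa [h0] at this
  have hslope := hasDerivAt_iff_tendsto_slope.mp hder
  have hmono : 𝓝[Set.Ioi (0:ℝ)] 0 ≤ 𝓝[≠] (0:ℝ) :=
    nhdsWithin_mono 0 (fun y hy => ne_of_gt hy)
  refine hclosed.mem_of_tendsto (hslope.mono_left hmono) ?_
  refine Filter.eventually_of_mem self_mem_nhdsWithin fun h hh => ?_
  have : slope x 0 h = (h - 0)⁻¹ • (x h - x 0) := rfl
  rw [this, h0]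
  exact (WUsub n m p A B C D).smul_mem _
    ((WUsub n m p A B C D).sub_mem (hW h (le_of_lt hh)) hv)

/-- `x₀ ∈ V*(Σ)` iff there is a feedback making `V*` invariant with zero output and
`x₀` lies in the largest subspace `V` with `(A+BF)V ⊆ V` and `(C+DF)V = 0` for some `F`. -/
theorem mem_weaklyUnobservable_iff (n m p : ℕ)
    (A : Matrix (Fin n) (Fin n) ℝ) (B : Matrix (Fin n) (Fin m) ℝ)
    (C : Matrix (Fin p) (Fin n) ℝ) (D : Matrix (Fin p) (Fin m) ℝ)
    (x₀ : Fin n → ℝ) :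
    x₀ ∈ weaklyUnobservable n m p A B C D ↔
      ∃ V : Submodule ℝ (Fin n → ℝ),
        FeedbackInvariant n m p A B C D V ∧
        (∀ W : Submodule ℝ (Fin n → ℝ), FeedbackInvariant n m p A B C D W → W ≤ V) ∧
        x₀ ∈ V := by
  constructor
  · intro hx₀
    refine ⟨sSup {V | FeedbackInvariant n m p A B C D V}, fi_sSup,
      fun W hW => le_sSup hW, ?_⟩
    have h1 : WUsub n m p A B C D ∈ {V | FeedbackInvariant n m p A B C D V} :=
      fi_of_pw _ pw_wu
    exact le_sSup h1 (show x₀ ∈ WUsub n m p A B C D from hx₀)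
  · rintro ⟨V, ⟨F, hF1, hF2⟩, -, hx⟩
    set M := A + B * F with hM
    refine ⟨fun t => (NormedSpace.exp (t • M)).mulVec x₀,
      fun t => F.mulVec ((NormedSpace.exp (t • M)).mulVec x₀), ?_, fun t ht => ?_, fun t ht => ?_⟩
    · simp
    · have := exp_deriv M x₀ t
      convert this using 1
      rw [hM, Matrix.add_mulVec, ← Matrix.mulVec_mulVec]
    · have hmem : (NormedSpace.exp (t • M)).mulVec x₀ ∈ V := exp_invariant V M hF1 x₀ hx t
      have := hF2 _ hmem
      rwa [Matrix.add_mulVec, ← Matrix.mulVec_mulVec] at this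

end Aux
end

section
/- Let K be a (p−m₀)×p matrix of full row rank with KD = 0, where m₀ = rank D. Then the rank condition rank [[CB, D],[D, 0]] = rank D + rank [B; D] holds if and only if rank [KCB; D] = rank [B; D]. -/
open Matrix

set_option synthInstance.maxHeartbeats 1000000 in
set_option maxHeartbeats 1000000 in
/-- With `K` a full-row-rank left annihilator of `D`, the rank condition
`rank [[CB, D],[D, 0]] = rank D + rank [B; D]` holds iff `rank [KCB; D] = rank [B; D]`. -/
theorem rank_condition_iff (n m p : ℕ)
    (B : Matrix (Fin n) (Fin m) ℝ) (C : Matrix (Fin p) (Fin n) ℝ)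
    (D : Matrix (Fin p) (Fin m) ℝ)
    (K : Matrix (Fin (p - D.rank)) (Fin p) ℝ)
    (hK : K.rank = p - D.rank) (hKD : K * D = 0) :
    (Matrix.fromBlocks (C * B) D D (0 : Matrix (Fin p) (Fin m) ℝ)).rank
        = D.rank + (Matrix.fromRows B D).rank ↔
      (Matrix.fromRows (K * (C * B)) D).rank = (Matrix.fromRows B D).rank := by
  classical
  set A := C * B with hA
  set M := Matrix.fromBlocks A D D (0 : Matrix (Fin p) (Fin m) ℝ) with hM
  set N := Matrix.fromRows (K * A) D with hN
  set R := Matrix.fromRows B D with hR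
  -- rank–nullity for the four matrices
  have hrnK : K.rank + Module.finrank ℝ (LinearMap.ker K.mulVecLin) = p := by
    have h := LinearMap.finrank_range_add_finrank_ker K.mulVecLin
    rwa [Module.finrank_fintype_fun_eq_card, Fintype.card_fin] at h
  have hrnD : D.rank + Module.finrank ℝ (LinearMap.ker D.mulVecLin) = m := by
    have h := LinearMap.finrank_range_add_finrank_ker D.mulVecLin
    rwa [Module.finrank_fintype_fun_eq_card, Fintype.card_fin] at h
  have hrnN : N.rank + Module.finrank ℝ (LinearMap.ker N.mulVecLin) = m := by
    have h := LinearMap.finrank_range_add_finrank_ker N.mulVecLin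
    rwa [Module.finrank_fintype_fun_eq_card, Fintype.card_fin] at h
  have hrnR : R.rank + Module.finrank ℝ (LinearMap.ker R.mulVecLin) = m := by
    have h := LinearMap.finrank_range_add_finrank_ker R.mulVecLin
    rwa [Module.finrank_fintype_fun_eq_card, Fintype.card_fin] at h
  have hrnM : M.rank + Module.finrank ℝ (LinearMap.ker M.mulVecLin) = m + m := by
    have h := LinearMap.finrank_range_add_finrank_ker M.mulVecLin
    rwa [Module.finrank_fintype_fun_eq_card, Fintype.card_sum, Fintype.card_fin] at h
  -- the kernel of K equals the range of D
  have hsub : LinearMap.range D.mulVecLin ≤ LinearMap.ker K.mulVecLin := by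
    rintro _ ⟨y, rfl⟩
    simp only [LinearMap.mem_ker, Matrix.mulVecLin_apply, Matrix.mulVec_mulVec, hKD,
      Matrix.zero_mulVec]
  have hDle : D.rank ≤ p := by
    have := D.rank_le_card_height
    simpa using this
  have hkerK : LinearMap.ker K.mulVecLin = LinearMap.range D.mulVecLin := by
    refine (Submodule.eq_of_le_of_finrank_le hsub ?_).symm
    have : Module.finrank ℝ (LinearMap.range D.mulVecLin) = D.rank := rfl
    omega
  -- the projection from ker M to ker N
  set f : LinearMap.ker M.mulVecLin →ₗ[ℝ] (Fin m → ℝ) :=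
    (LinearMap.funLeft ℝ ℝ Sum.inl).comp (LinearMap.ker M.mulVecLin).subtype with hf
  have hmemM : ∀ x : (Fin m ⊕ Fin m) → ℝ, x ∈ LinearMap.ker M.mulVecLin ↔
      (A *ᵥ (x ∘ Sum.inl) + D *ᵥ (x ∘ Sum.inr) = 0 ∧ D *ᵥ (x ∘ Sum.inl) = 0) := by
    intro x
    rw [LinearMap.mem_ker, Matrix.mulVecLin_apply, hM, Matrix.fromBlocks_mulVec]
    constructor
    · intro h
      refine ⟨funext fun i => congrFun h (Sum.inl i), ?_⟩
      have h2 : D *ᵥ (x ∘ Sum.inl) + (0 : Matrix (Fin p) (Fin m) ℝ) *ᵥ (x ∘ Sum.inr) = 0 :=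
        funext fun i => congrFun h (Sum.inr i)
      rwa [Matrix.zero_mulVec, add_zero] at h2
    · rintro ⟨h1, h2⟩
      funext i
      cases i with
      | inl i => exact congrFun h1 i
      | inr i => simp [Matrix.zero_mulVec, congrFun h2 i]
  have hmemN : ∀ z : Fin m → ℝ, z ∈ LinearMap.ker N.mulVecLin ↔
      ((K * A) *ᵥ z = 0 ∧ D *ᵥ z = 0) := by
    intro z
    rw [LinearMap.mem_ker, Matrix.mulVecLin_apply, hN, Matrix.fromRows_mulVec]
    constructor
    · intro h
      exact ⟨funext fun i => congrFun h (Sum.inl i), funext fun i => congrFun h (Sum.inr i)⟩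
    · rintro ⟨h1, h2⟩
      funext i
      cases i with
      | inl i => exact congrFun h1 i
      | inr i => exact congrFun h2 i
  have hrangef : LinearMap.range f = LinearMap.ker N.mulVecLin := by
    apply le_antisymm
    · rintro _ ⟨⟨x, hx⟩, rfl⟩
      rw [hmemM] at hx
      rw [hmemN]
      have hf1 : f ⟨x, (hmemM x).2 hx⟩ = x ∘ Sum.inl := rfl
      rw [hf1]
      refine ⟨?_, hx.2⟩
      have : A *ᵥ (x ∘ Sum.inl) = -(D *ᵥ (x ∘ Sum.inr)) := by
        have := hx.1; linear_combination (norm := module) this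
      rw [← Matrix.mulVec_mulVec, this]
      rw [Matrix.mulVec_neg, Matrix.mulVec_mulVec, hKD, Matrix.zero_mulVec, neg_zero]
    · intro z hz
      rw [hmemN] at hz
      have hAz : A *ᵥ z ∈ LinearMap.ker K.mulVecLin := by
        rw [LinearMap.mem_ker, Matrix.mulVecLin_apply, Matrix.mulVec_mulVec, hz.1]
      rw [hkerK] at hAz
      obtain ⟨y, hy⟩ := hAz
      have hy' : D *ᵥ y = A *ᵥ z := hy
      have hxmem : (Sum.elim z (-y) : (Fin m ⊕ Fin m) → ℝ) ∈ LinearMap.ker M.mulVecLin := by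
        rw [hmemM]
        constructor
        · simp only [Sum.elim_comp_inl, Sum.elim_comp_inr, Matrix.mulVec_neg, hy']
          abel
        · simpa using hz.2
      exact ⟨⟨_, hxmem⟩, rfl⟩
  -- ker f is equivalent to ker D
  have hkerf : Module.finrank ℝ (LinearMap.ker f)
      = Module.finrank ℝ (LinearMap.ker D.mulVecLin) := by
    have hmap : ∀ x : LinearMap.ker f, ((x : LinearMap.ker M.mulVecLin) : (Fin m ⊕ Fin m) → ℝ)
        ∘ Sum.inr ∈ LinearMap.ker D.mulVecLin := by
      rintro ⟨⟨x, hx⟩, hfx⟩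
      rw [hmemM] at hx
      have h1 : x ∘ Sum.inl = 0 := hfx
      rw [LinearMap.mem_ker, Matrix.mulVecLin_apply]
      have := hx.1
      rwa [h1, Matrix.mulVec_zero, zero_add] at this
    set g : LinearMap.ker f →ₗ[ℝ] LinearMap.ker D.mulVecLin :=
      LinearMap.codRestrict _ ((LinearMap.funLeft ℝ ℝ Sum.inr).comp
        ((LinearMap.ker M.mulVecLin).subtype.comp (LinearMap.ker f).subtype)) hmap with hg
    have hbij : Function.Bijective g := by
      constructor
      · rintro ⟨⟨x, hx⟩, hfx⟩ ⟨⟨x', hx'⟩, hfx'⟩ h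
        have h2 : x ∘ Sum.inr = x' ∘ Sum.inr := congrArg Subtype.val h
        have h1 : x ∘ Sum.inl = 0 := hfx
        have h1' : x' ∘ Sum.inl = 0 := hfx'
        ext i
        cases i with
        | inl i =>
          show x (Sum.inl i) = x' (Sum.inl i)
          rw [show x (Sum.inl i) = 0 from congrFun h1 i,
            show x' (Sum.inl i) = 0 from congrFun h1' i]
        | inr i =>
          show x (Sum.inr i) = x' (Sum.inr i)
          exact congrFun h2 i
      · rintro ⟨y, hy⟩
        have hym : (Sum.elim 0 y : (Fin m ⊕ Fin m) → ℝ) ∈ LinearMap.ker M.mulVecLin := by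
          rw [hmemM]
          rw [LinearMap.mem_ker, Matrix.mulVecLin_apply] at hy
          simp [hy]
        have hker : (⟨Sum.elim 0 y, hym⟩ : LinearMap.ker M.mulVecLin) ∈ LinearMap.ker f := by
          rw [LinearMap.mem_ker]
          rfl
        exact ⟨⟨⟨Sum.elim 0 y, hym⟩, hker⟩, rfl⟩
    exact (LinearEquiv.ofBijective g hbij).finrank_eq
  -- exact sequence: νM = νN + νD
  have hnu : Module.finrank ℝ (LinearMap.ker M.mulVecLin)
      = Module.finrank ℝ (LinearMap.ker N.mulVecLin)
        + Module.finrank ℝ (LinearMap.ker D.mulVecLin) := by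
    have h := LinearMap.finrank_range_add_finrank_ker f
    rw [hrangef, hkerf] at h
    omega
  constructor <;> intro h <;> omega
end
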